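/- Let m, n ≥ 2 and for each position (p,q) ∈ {1,…,m}×{1,…,n} define the dense matrix W_{pq} = E_{pq} − (1/2)·J, where E_{pq} is the δ-matrix with 1 at position (p,q) and J is the m×n matrix with every entry equal to 1. Then every W_{pq} has rank exactly 2, and for any set S ⊆ {1,…,m}×{1,…,n} and any function Φ from m×n real matrices to m×n real matrices that depends only on the entries in S, at most one position (p,q) ∉ S satisfies ‖Φ(W_{pq}) − W_{pq}‖_max < 1/2; consequently at least (mn − |S|) − 1 of the matrices W_{pq} with (p,q) ∉ S satisfy ‖Φ(W_{pq}) − W_{pq}‖_max ≥ 1/2. -/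

import Mathlib

/-- The entrywise maximum norm of a real matrix, `‖A‖_max = max_{i,j} |a_{ij}|`. -/
noncomputable def maxNorm {m n : ℕ} (A : Matrix (Fin m) (Fin n) ℝ) : ℝ :=
  ⨆ i, ⨆ j, |A i j|

/-- The dense rank-2 matrix `W_{pq} = E_{pq} − (1/2)·J`, where `E_{pq}` is the δ-matrix
with a `1` at position `(p,q)` and `J` is the all-ones matrix. -/
noncomputable def Wmat {m n : ℕ} (p : Fin m) (q : Fin n) : Matrix (Fin m) (Fin n) ℝ :=
  Matrix.single p q (1 : ℝ) - (1 / 2 : ℝ) • Matrix.of fun _ _ => (1 : ℝ)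

open Module

lemma Wmat_apply {m n : ℕ} (p : Fin m) (q : Fin n) (i : Fin m) (j : Fin n) :
    Wmat p q i j = (if p = i ∧ q = j then (1:ℝ) else 0) - 1/2 := by
  simp [Wmat, Matrix.single]

lemma abs_le_maxNorm {m n : ℕ} (A : Matrix (Fin m) (Fin n) ℝ) (i : Fin m) (j : Fin n) :
    |A i j| ≤ maxNorm A := by
  have h1 : |A i j| ≤ ⨆ j, |A i j| :=
    le_ciSup (f := fun j => |A i j|) (Set.Finite.bddAbove (Set.finite_range _)) j
  exact h1.trans (le_ciSup (f := fun i => ⨆ j, |A i j|) (Set.Finite.bddAbove (Set.finite_range _)) i)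

lemma Wmat_rank {m n : ℕ} (hm : 2 ≤ m) (hn : 2 ≤ n) (p : Fin m) (q : Fin n) :
    (Wmat p q).rank = 2 := by
  haveI : Nontrivial (Fin m) := Fin.nontrivial_iff_two_le.mpr hm
  haveI : Nontrivial (Fin n) := Fin.nontrivial_iff_two_le.mpr hn
  obtain ⟨p', hp'⟩ := exists_ne p
  obtain ⟨q', hq'⟩ := exists_ne q
  set W := Wmat p q with hW
  -- columns q and q' are in the range of mulVecLin
  have hcol : ∀ j : Fin n, (fun i => W i j) ∈ LinearMap.range W.mulVecLin := by
    intro j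
    exact ⟨Pi.single j 1, by ext i; simp [Matrix.mulVecLin, Matrix.mulVec, dotProduct,
      Pi.single_apply, mul_ite]⟩
  set u : Fin m → ℝ := Pi.single p 1 with hu
  set v : Fin m → ℝ := fun _ => 1 with hv
  set c1 : Fin m → ℝ := fun i => W i q with hc1
  set c2 : Fin m → ℝ := fun i => W i q' with hc2
  have hc1p : c1 p = 1/2 := by simp [hc1, hW, Wmat_apply]; norm_num
  have hc1p' : c1 p' = -(1/2) := by
    simp [hc1, hW, Wmat_apply, hp'.symm]
  have hc2v : ∀ i, c2 i = -(1/2) := by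
    intro i; simp [hc2, hW, Wmat_apply, hq'.symm]
  have hli : LinearIndependent ℝ ![c1, c2] := by
    rw [LinearIndependent.pair_iff]
    intro s t hst
    have h1 := congrFun hst p
    have h2 := congrFun hst p'
    simp [hc1p, hc1p', hc2v] at h1 h2
    constructor <;> linarith
  have hge : 2 ≤ finrank ℝ (LinearMap.range W.mulVecLin) := by
    have hspan : Submodule.span ℝ (Set.range ![c1, c2]) ≤ LinearMap.range W.mulVecLin := by
      rw [Submodule.span_le]
      rintro x hx
      simp only [Matrix.range_cons, Matrix.range_empty, Set.union_empty,
        Set.union_singleton] at hx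
      rcases hx with h | h <;> subst h
      · exact hcol q'
      · exact hcol q
    calc 2 = finrank ℝ (Submodule.span ℝ (Set.range ![c1, c2])) := by
            rw [finrank_span_eq_card hli]; simp
      _ ≤ finrank ℝ (LinearMap.range W.mulVecLin) := Submodule.finrank_mono hspan
  have hle : finrank ℝ (LinearMap.range W.mulVecLin) ≤ 2 := by
    have hsub : LinearMap.range W.mulVecLin ≤ Submodule.span ℝ (Set.range ![u, v]) := by
      rintro _ ⟨x, rfl⟩
      have hx : W.mulVecLin x = x q • u + (-(∑ j, x j)/2) • v := by
        ext i
        simp only [Matrix.mulVecLin_apply, Matrix.mulVec, dotProduct, hW, Wmat_apply,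
          sub_mul, Finset.sum_sub_distrib, Pi.add_apply, Pi.smul_apply, hu, hv,
          Pi.single_apply, smul_eq_mul, ← Finset.mul_sum]
        have key : ∑ j, (if p = i ∧ q = j then (1:ℝ) else 0) * x j
            = if i = p then x q else 0 := by
          by_cases h : i = p
          · subst h; simp [ite_mul]
          · simp [h, Ne.symm h]
        rw [key]
        by_cases h : i = p <;> simp [h] <;> ring
      rw [hx]
      exact Submodule.add_mem _
        (Submodule.smul_mem _ _ (Submodule.subset_span (by simp)))
        (Submodule.smul_mem _ _ (Submodule.subset_span (by simp)))
    calc finrank ℝ (LinearMap.range W.mulVecLin)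
        ≤ finrank ℝ (Submodule.span ℝ (Set.range ![u, v])) := Submodule.finrank_mono hsub
      _ ≤ 2 := by
          refine (finrank_span_le_card _).trans ?_
          rw [Set.toFinset_range]
          exact (Finset.card_image_le).trans (by simp)
  rw [Matrix.rank]
  omega

lemma Wmat_diag {m n : ℕ} (p : Fin m) (q : Fin n) : Wmat p q p q = 1/2 := by
  simp [Wmat_apply]; norm_num

lemma Wmat_off {m n : ℕ} (p i : Fin m) (q j : Fin n) (h : (p, q) ≠ (i, j)) :
    Wmat p q i j = -(1/2) := by
  rw [Wmat_apply, if_neg]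
  · norm_num
  · rintro ⟨rfl, rfl⟩; exact h rfl

/-- **Any algorithm reading only the entries in `S` fails on almost all of the dense rank-2
matrices `W_{pq} = E_{pq} − (1/2)·J`.**  For `m, n ≥ 2` each `W_{pq}` has rank exactly `2`,
and for any function `Φ` on `m×n` real matrices depending only on the entries indexed by the
finite set `S`, at most one position `(p,q) ∉ S` satisfies
`‖Φ(W_{pq}) − W_{pq}‖_max < 1/2`; consequently at least `(mn − |S|) − 1` of the matrices
`W_{pq}` with `(p,q) ∉ S` satisfy `‖Φ(W_{pq}) − W_{pq}‖_max ≥ 1/2`. -/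
theorem adversary_dense_rank_two_matrices {m n : ℕ} (hm : 2 ≤ m) (hn : 2 ≤ n)
    (S : Finset (Fin m × Fin n))
    (Φ : Matrix (Fin m) (Fin n) ℝ → Matrix (Fin m) (Fin n) ℝ)
    (hΦ : ∀ A B : Matrix (Fin m) (Fin n) ℝ,
      (∀ pq ∈ S, A pq.1 pq.2 = B pq.1 pq.2) → Φ A = Φ B) :
    (∀ (p : Fin m) (q : Fin n), (Wmat p q).rank = 2) ∧
    ({pq : Fin m × Fin n | pq ∉ S ∧
        maxNorm (Φ (Wmat pq.1 pq.2) - Wmat pq.1 pq.2) < 1 / 2} : Set _).Subsingleton ∧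
    m * n - S.card - 1 ≤
      ({pq : Fin m × Fin n | pq ∉ S ∧
        1 / 2 ≤ maxNorm (Φ (Wmat pq.1 pq.2) - Wmat pq.1 pq.2)} : Set _).ncard := by
  classical
  have hsub : ({pq : Fin m × Fin n | pq ∉ S ∧
      maxNorm (Φ (Wmat pq.1 pq.2) - Wmat pq.1 pq.2) < 1 / 2} : Set _).Subsingleton := by
    rintro a ⟨haS, ha⟩ b ⟨hbS, hb⟩
    by_contra hab
    have hWeq : Φ (Wmat a.1 a.2) = Φ (Wmat b.1 b.2) := by
      refine hΦ _ _ fun pq hpq => ?_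
      rw [Wmat_off a.1 pq.1 a.2 pq.2 (by
          intro h; obtain ⟨h1, h2⟩ := Prod.mk.injEq .. ▸ h
          exact haS (by rw [show a = pq from Prod.ext h1 h2]; exact hpq)),
        Wmat_off b.1 pq.1 b.2 pq.2 (by
          intro h; obtain ⟨h1, h2⟩ := Prod.mk.injEq .. ▸ h
          exact hbS (by rw [show b = pq from Prod.ext h1 h2]; exact hpq))]
    have h1 : |(Φ (Wmat a.1 a.2) - Wmat a.1 a.2) a.1 a.2| < 1/2 :=
      lt_of_le_of_lt (abs_le_maxNorm _ _ _) ha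
    have h2 : |(Φ (Wmat b.1 b.2) - Wmat b.1 b.2) a.1 a.2| < 1/2 :=
      lt_of_le_of_lt (abs_le_maxNorm _ _ _) hb
    rw [Matrix.sub_apply, Wmat_diag, abs_lt] at h1
    rw [Matrix.sub_apply, Wmat_off b.1 a.1 b.2 a.2
      (by intro h; obtain ⟨h1, h2⟩ := Prod.mk.injEq .. ▸ h; exact hab (Prod.ext h1.symm h2.symm)),
      abs_lt, ← hWeq] at h2
    obtain ⟨h1l, h1r⟩ := h1
    obtain ⟨h2l, h2r⟩ := h2
    linarith
  refine ⟨fun p q => Wmat_rank hm hn p q, hsub, ?_⟩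
  set P : Fin m × Fin n → Prop :=
    fun pq => maxNorm (Φ (Wmat pq.1 pq.2) - Wmat pq.1 pq.2) < 1/2 with hP
  have hgood : (Sᶜ.filter P).card ≤ 1 := by
    refine Finset.card_le_one.mpr fun a ha b hb => ?_
    simp only [Finset.mem_filter, Finset.mem_compl] at ha hb
    exact hsub ⟨ha.1, ha.2⟩ ⟨hb.1, hb.2⟩
  have hpart := Finset.card_filter_add_card_filter_not (s := Sᶜ) (p := P)
  have hcompl : Sᶜ.card = m * n - S.card := by
    rw [Finset.card_compl]; simp
  have hset : ({pq : Fin m × Fin n | pq ∉ S ∧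
      1 / 2 ≤ maxNorm (Φ (Wmat pq.1 pq.2) - Wmat pq.1 pq.2)} : Set _)
      = ↑(Sᶜ.filter fun pq => ¬ P pq) := by
    ext pq
    simp [hP, not_lt]
  rw [hset, Set.ncard_coe_finset]
  omega
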